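/- Let T be a finite tree, let M be a minimal dominating set of T, and let v ∈ a_1(M). Then there exists a minimal dominating set M' of T with |M'| ≥ |M| + |N(v) ∩ N_1(M)| − 1; in particular |M'| ≥ |M|. -/

import Mathlib

open scoped Classical

variable {V : Type*} [Fintype V] [DecidableEq V]

/-- `S` is a dominating set of `G`: every vertex is in `S` or adjacent to a vertex of `S`. -/
def IsDomSet (G : SimpleGraph V) (S : Finset V) : Prop :=
  ∀ v : V, v ∈ S ∨ ∃ u ∈ S, G.Adj u v

/-- `S` is a minimal dominating set: it is dominating and no proper subset is dominating. -/
def MinimalDomSet (G : SimpleGraph V) (S : Finset V) : Prop :=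
  IsDomSet G S ∧ ∀ T : Finset V, T ⊂ S → ¬ IsDomSet G T

/-- `d_i(G)`: the number of dominating sets of `G` of cardinality `i`. -/
noncomputable def domCount (G : SimpleGraph V) (i : ℕ) : ℕ :=
  (Finset.univ.filter fun S : Finset V => IsDomSet G S ∧ S.card = i).card

/-- `a(S)`: the set of critical vertices of a dominating set `S`. -/
noncomputable def aSet (G : SimpleGraph V) (S : Finset V) : Finset V :=
  S.filter fun v => ¬ IsDomSet G (S.erase v)

/-- `a(G,i)`: the sum of `|a(S)|` over all dominating sets `S` of cardinality `i`. -/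
noncomputable def aTotal (G : SimpleGraph V) (i : ℕ) : ℕ :=
  ∑ S ∈ Finset.univ.filter (fun S : Finset V => IsDomSet G S ∧ S.card = i), (aSet G S).card

/-- `γ(G)`: the minimum cardinality of a dominating set. -/
noncomputable def gamma (G : SimpleGraph V) : ℕ :=
  sInf {k | ∃ S : Finset V, IsDomSet G S ∧ S.card = k}

/-- `Γ(G)`: the maximum cardinality of a minimal dominating set. -/
noncomputable def bigGamma (G : SimpleGraph V) : ℕ :=
  sSup {k | ∃ S : Finset V, MinimalDomSet G S ∧ S.card = k}

/-- The closed neighbourhood `N[v]` as a finset. -/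
noncomputable def closedNbhd (G : SimpleGraph V) (v : V) : Finset V :=
  Finset.univ.filter fun u => u = v ∨ G.Adj v u

/-- `N_1(S)`: vertices outside `S` with exactly one closed neighbour in `S`. -/
noncomputable def N1Set (G : SimpleGraph V) (S : Finset V) : Finset V :=
  Finset.univ.filter fun v => v ∉ S ∧ (closedNbhd G v ∩ S).card = 1

/-- `N_2(S)`: vertices outside `S` with at least two closed neighbours in `S`. -/
noncomputable def N2Set (G : SimpleGraph V) (S : Finset V) : Finset V :=
  Finset.univ.filter fun v => v ∉ S ∧ 2 ≤ (closedNbhd G v ∩ S).card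

/-- `a_1(S)`: critical vertices whose closed neighbourhood meets `N_1(S)`. -/
noncomputable def a1Set (G : SimpleGraph V) (S : Finset V) : Finset V :=
  (aSet G S).filter fun v => (closedNbhd G v ∩ N1Set G S).Nonempty

/-- `a_2(S)`: critical vertices whose closed neighbourhood misses `N_1(S)`. -/
noncomputable def a2Set (G : SimpleGraph V) (S : Finset V) : Finset V :=
  (aSet G S).filter fun v => closedNbhd G v ∩ N1Set G S = ∅

/-- In the tree `G` rooted at `r`, `x` is a descendant of `y`:
`y` lies on the unique path from `x` to the root `r`. -/
def Descendant (G : SimpleGraph V) (r x y : V) : Prop :=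
  G.dist x r = G.dist x y + G.dist y r

/-- `x` is a child of `y` in `G` rooted at `r`. -/
def IsChild (G : SimpleGraph V) (r x y : V) : Prop :=
  Descendant G r x y ∧ G.dist y x = 1

/-- `p` is the parent of `x` in `G` rooted at `r`. -/
def IsParent (G : SimpleGraph V) (r p x : V) : Prop :=
  IsChild G r x p

/-- `x` is a grandchild of `y` in `G` rooted at `r`. -/
def IsGrandchild (G : SimpleGraph V) (r x y : V) : Prop :=
  Descendant G r x y ∧ G.dist y x = 2

open Finset SimpleGraph

lemma exists_path_length_dist {G : SimpleGraph V} (hT : G.IsTree) (a b : V) :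
    ∃ p : G.Walk a b, p.IsPath ∧ p.length = G.dist a b := by
  obtain ⟨q, hq⟩ := hT.isConnected.exists_walk_length_eq_dist a b
  refine ⟨q.bypass, q.bypass_isPath, le_antisymm ?_ (SimpleGraph.dist_le _)⟩
  calc q.bypass.length ≤ q.length := q.length_bypass_le
    _ = G.dist a b := hq

lemma path_length_eq_dist {G : SimpleGraph V} (hT : G.IsTree) {a b : V} {p : G.Walk a b}
    (hp : p.IsPath) : p.length = G.dist a b := by
  obtain ⟨q, hq, hlen⟩ := exists_path_length_dist hT a b
  have h := hT.IsAcyclic.path_unique ⟨p, hp⟩ ⟨q, hq⟩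
  rw [Subtype.ext_iff] at h
  simp only at h
  rw [h, hlen]

lemma exists_parent {G : SimpleGraph V} (hT : G.IsTree) {v x : V} (hx : x ≠ v) :
    ∃ y, G.Adj x y ∧ G.dist y v + 1 = G.dist x v ∧
      ∀ y', G.Adj x y' → G.dist y' v + 1 = G.dist x v → y' = y := by
  obtain ⟨p, hp, hlen⟩ := exists_path_length_dist hT x v
  cases p with
  | nil => exact absurd rfl hx
  | @cons _ y _ hadj q =>
    have hq : q.IsPath := hp.of_cons
    have hql : q.length = G.dist y v := path_length_eq_dist hT hq
    have hyd : G.dist y v + 1 = G.dist x v := by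
      rw [SimpleGraph.Walk.length_cons] at hlen; omega
    refine ⟨y, hadj, hyd, ?_⟩
    intro y' hadj' hyd'
    obtain ⟨q', hq', hlen'⟩ := exists_path_length_dist hT y' v
    have hxs : x ∉ q'.support := by
      intro hmem
      have hsplit := congrArg SimpleGraph.Walk.length (q'.take_spec hmem)
      rw [SimpleGraph.Walk.length_append] at hsplit
      have h1 : G.dist x v ≤ (q'.dropUntil x hmem).length := SimpleGraph.dist_le _
      have h2 : (q'.takeUntil x hmem).length ≠ 0 := by
        intro h0
        exact hadj'.ne' (SimpleGraph.Walk.eq_of_length_eq_zero h0)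
      omega
    have hpath' : (SimpleGraph.Walk.cons hadj' q').IsPath := hq'.cons hxs
    have h := hT.IsAcyclic.path_unique ⟨SimpleGraph.Walk.cons hadj' q', hpath'⟩
        ⟨SimpleGraph.Walk.cons hadj q, hp⟩
    rw [Subtype.ext_iff] at h
    simp only at h
    have hsup := congrArg SimpleGraph.Walk.support h
    simp only [SimpleGraph.Walk.support_cons] at hsup
    have hsup' : q'.support = q.support := by
      injection hsup
    have h3 : q'.support.head? = q.support.head? := by rw [hsup']
    rw [q'.support_eq_cons, q.support_eq_cons] at h3
    exact Option.some.inj h3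

lemma adj_dist {G : SimpleGraph V} (hT : G.IsTree) (v : V) {x y : V} (h : G.Adj x y) :
    G.dist x v = G.dist y v + 1 ∨ G.dist y v = G.dist x v + 1 := by
  obtain ⟨q, hq, hlen⟩ := exists_path_length_dist hT y v
  by_cases hxs : x ∈ q.support
  · right
    have tri : G.dist y v ≤ G.dist x v + 1 := by
      have h1 := hT.isConnected.dist_triangle (u := y) (v := x) (w := v)
      have hyx : G.dist y x = 1 := SimpleGraph.dist_eq_one_iff_adj.mpr h.symm
      omega
    have hsplit := congrArg SimpleGraph.Walk.length (q.take_spec hxs)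
    rw [SimpleGraph.Walk.length_append] at hsplit
    have h1 : G.dist x v ≤ (q.dropUntil x hxs).length := SimpleGraph.dist_le _
    have h2 : (q.takeUntil x hxs).length ≠ 0 := by
      intro h0
      exact h.ne (SimpleGraph.Walk.eq_of_length_eq_zero h0).symm
    omega
  · left
    have hpath : (SimpleGraph.Walk.cons h q).IsPath := hq.cons hxs
    have h2 := path_length_eq_dist hT hpath
    rw [SimpleGraph.Walk.length_cons, hlen] at h2
    omega

set_option maxHeartbeats 1000000 in
lemma indep_plus_matching {G : SimpleGraph V} (hT : G.IsTree) (v : V) (π : V → V)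
    (hπ : ∀ x, x ≠ v → G.Adj x (π x) ∧ G.dist (π x) v + 1 = G.dist x v ∧
          ∀ y', G.Adj x y' → G.dist y' v + 1 = G.dist x v → y' = π x) :
    ∀ (n : ℕ) (R : Finset V), R.card ≤ n →
    ∃ I S : Finset V, I ⊆ R ∧ (∀ a ∈ I, ∀ b ∈ I, ¬ G.Adj a b) ∧
      S ⊆ R ∧ (∀ x ∈ S, x ≠ v ∧ π x ∈ R) ∧
      (∀ x ∈ S, ∀ y ∈ S, x ≠ y → π x ≠ y ∧ π x ≠ π y) ∧
      R.card ≤ I.card + S.card := by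
  intro n
  induction n with
  | zero =>
    intro R hR
    have hRe : R = ∅ := Finset.card_eq_zero.mp (Nat.le_zero.mp hR)
    subst hRe
    exact ⟨∅, ∅, by simp, by simp, by simp, by simp, by simp, by simp⟩
  | succ n ih =>
    intro R hR
    rcases R.eq_empty_or_nonempty with rfl | hne
    · exact ⟨∅, ∅, by simp, by simp, by simp, by simp, by simp, by simp⟩
    obtain ⟨x, hxR, hxmax⟩ := R.exists_max_image (fun y => G.dist y v) hne
    by_cases hxv : x = v
    · subst hxv
      have hsub : R ⊆ {x} := by
        intro y hy
        have h1 := hxmax y hy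
        have h2 : G.dist x x = 0 := SimpleGraph.dist_self
        rw [Finset.mem_singleton]
        exact (hT.isConnected.dist_eq_zero_iff).mp (by omega)
      refine ⟨R, ∅, Finset.Subset.refl R, ?_, by simp, by simp, by simp, by simp⟩
      intro a ha b hb
      have ha' := Finset.mem_singleton.mp (hsub ha)
      have hb' := Finset.mem_singleton.mp (hsub hb)
      subst ha'; subst hb'
      exact G.irrefl
    · have hkey : ∀ y ∈ R, G.Adj x y → y = π x := by
        intro y hy hadj
        rcases adj_dist hT v hadj with h1 | h2
        · exact (hπ x hxv).2.2 y hadj (by omega)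
        · exfalso; have := hxmax y hy; omega
      by_cases hpx : π x ∈ R
      · have hπx_ne : π x ≠ x := ((hπ x hxv).1).ne'
        set R' := (R.erase x).erase (π x) with hR'
        have hR'subR : R' ⊆ R := by
          intro a ha
          exact Finset.mem_of_mem_erase (Finset.mem_of_mem_erase ha)
        have hR'x : x ∉ R' := by simp [hR', Finset.mem_erase]
        have hR'πx : π x ∉ R' := by simp [hR', Finset.mem_erase]
        have hcard1 : (R.erase x).card + 1 = R.card := Finset.card_erase_add_one hxR
        have hπxR : π x ∈ R.erase x := Finset.mem_erase.mpr ⟨hπx_ne, hpx⟩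
        have hcard2 : R'.card + 1 = (R.erase x).card := Finset.card_erase_add_one hπxR
        obtain ⟨I', S', hI'sub, hI'ind, hS'sub, hS'v, hS'MC, hcount⟩ := ih R' (by omega)
        have hxI' : x ∉ I' := fun h => hR'x (hI'sub h)
        have hxS' : x ∉ S' := fun h => hR'x (hS'sub h)
        refine ⟨insert x I', insert x S', ?_, ?_, ?_, ?_, ?_, ?_⟩
        · exact Finset.insert_subset hxR (hI'sub.trans hR'subR)
        · intro a ha b hb
          rcases Finset.mem_insert.mp ha with rfl | ha' <;>
            rcases Finset.mem_insert.mp hb with rfl | hb'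
          · exact G.irrefl
          · intro hadj
            exact hR'πx ((hkey b (hR'subR (hI'sub hb')) hadj) ▸ hI'sub hb')
          · intro hadj
            exact hR'πx ((hkey a (hR'subR (hI'sub ha')) hadj.symm) ▸ hI'sub ha')
          · exact hI'ind a ha' b hb'
        · exact Finset.insert_subset hxR ((hS'sub).trans hR'subR)
        · intro a ha
          rcases Finset.mem_insert.mp ha with rfl | ha'
          · exact ⟨hxv, hpx⟩
          · exact ⟨(hS'v a ha').1, hR'subR (hS'v a ha').2⟩
        · intro a ha b hb hab
          rcases Finset.mem_insert.mp ha with rfl | ha' <;>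
            rcases Finset.mem_insert.mp hb with rfl | hb'
          · exact absurd rfl hab
          · exact ⟨fun h => hR'πx (h ▸ hS'sub hb'), fun h => hR'πx (h ▸ (hS'v b hb').2)⟩
          · exact ⟨fun h => hR'x (h ▸ (hS'v a ha').2), fun h => hR'πx (h ▸ (hS'v a ha').2)⟩
          · exact hS'MC a ha' b hb' hab
        · rw [Finset.card_insert_of_notMem hxI', Finset.card_insert_of_notMem hxS']
          omega
      · set R' := R.erase x with hR'
        have hR'subR : R' ⊆ R := Finset.erase_subset _ _
        have hR'x : x ∉ R' := Finset.notMem_erase _ _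
        have hcard1 : R'.card + 1 = R.card := Finset.card_erase_add_one hxR
        obtain ⟨I', S', hI'sub, hI'ind, hS'sub, hS'v, hS'MC, hcount⟩ := ih R' (by omega)
        have hxI' : x ∉ I' := fun h => hR'x (hI'sub h)
        refine ⟨insert x I', S', ?_, ?_, hS'sub.trans hR'subR, ?_, hS'MC, ?_⟩
        · exact Finset.insert_subset hxR (hI'sub.trans hR'subR)
        · intro a ha b hb
          rcases Finset.mem_insert.mp ha with rfl | ha' <;>
            rcases Finset.mem_insert.mp hb with rfl | hb'
          · exact G.irrefl
          · intro hadj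
            exact hpx ((hkey b (hR'subR (hI'sub hb')) hadj) ▸ hR'subR (hI'sub hb'))
          · intro hadj
            exact hpx ((hkey a (hR'subR (hI'sub ha')) hadj.symm) ▸ hR'subR (hI'sub ha'))
          · exact hI'ind a ha' b hb'
        · intro a ha
          exact ⟨(hS'v a ha).1, hR'subR (hS'v a ha).2⟩
        · rw [Finset.card_insert_of_notMem hxI']
          omega

set_option maxHeartbeats 1000000 in
lemma matching_bound {G : SimpleGraph V} (hT : G.IsTree) (M : Finset V)
    (hM : MinimalDomSet G M) (v : V) (hvM : v ∈ M) (π : V → V)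
    (hπ : ∀ x, x ≠ v → G.Adj x (π x) ∧ G.dist (π x) v + 1 = G.dist x v ∧
          ∀ y', G.Adj x y' → G.dist y' v + 1 = G.dist x v → y' = π x)
    (S : Finset V) (hS1 : ∀ x ∈ S, x ≠ v)
    (hMC : ∀ x ∈ S, ∀ y ∈ S, x ≠ y → π x ≠ y ∧ π x ≠ π y) :
    S.card ≤ (Finset.univ \ (M.erase v ∪ (G.neighborFinset v ∩ N1Set G M))).card := by
  set A := G.neighborFinset v ∩ N1Set G M with hA
  set W := M.erase v ∪ A with hW
  have hAfact : ∀ u ∈ A, u ∉ M ∧ ∀ m ∈ M, G.Adj m u → m = v := by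
    intro u hu
    rw [hA, Finset.mem_inter, SimpleGraph.mem_neighborFinset] at hu
    obtain ⟨huv, huN⟩ := hu
    rw [N1Set, Finset.mem_filter] at huN
    obtain ⟨-, huM, hcard⟩ := huN
    refine ⟨huM, ?_⟩
    intro m hm hadj
    obtain ⟨a, ha⟩ := Finset.card_eq_one.mp hcard
    have hv' : v ∈ closedNbhd G u ∩ M := by
      rw [Finset.mem_inter]
      refine ⟨?_, hvM⟩
      rw [closedNbhd, Finset.mem_filter]
      exact ⟨Finset.mem_univ _, Or.inr huv.symm⟩
    have hm' : m ∈ closedNbhd G u ∩ M := by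
      rw [Finset.mem_inter]
      refine ⟨?_, hm⟩
      rw [closedNbhd, Finset.mem_filter]
      exact ⟨Finset.mem_univ _, Or.inr hadj.symm⟩
    rw [ha, Finset.mem_singleton] at hv' hm'
    rw [hm', hv']
  have hvW : v ∉ W := by
    rw [hW, Finset.mem_union]
    rintro (h | h)
    · exact (Finset.mem_erase.mp h).1 rfl
    · exact (hAfact v h).1 hvM
  have hπA : ∀ u ∈ A, π u = v := by
    intro u hu
    have huv : G.Adj v u := by
      have hu' := hu
      rw [hA, Finset.mem_inter, SimpleGraph.mem_neighborFinset] at hu'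
      exact hu'.1
    have hune : u ≠ v := fun h => G.irrefl (h ▸ huv)
    have h1 := (hπ u hune).2.1
    have h2 : G.dist u v = 1 := SimpleGraph.dist_eq_one_iff_adj.mpr huv.symm
    have h0 : G.dist (π u) v = 0 := by omega
    exact (hT.isConnected.dist_eq_zero_iff).mp h0
  have hadjpar : ∀ a b : V, G.Adj a b → π a = b ∨ π b = a := by
    intro a b hab
    rcases adj_dist hT v hab with h1 | h2
    · have hane : a ≠ v := by
        intro h; subst h
        rw [SimpleGraph.dist_self] at h1; omega
      exact Or.inl ((hπ a hane).2.2 b hab (by omega)).symm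
    · have hbne : b ≠ v := by
        intro h; subst h
        rw [SimpleGraph.dist_self] at h2; omega
      exact Or.inr ((hπ b hbne).2.2 a hab.symm (by omega)).symm
  have hpriv : ∀ m ∈ M, m ≠ v → (π m) ∈ M →
      ∃ w, w ∉ W ∧ w ∉ M ∧ G.Adj m w ∧ ∀ u ∈ M, G.Adj u w → u = m := by
    intro m hm hmv hπmM
    have hadjm : G.Adj m (π m) := (hπ m hmv).1
    have hnd := hM.2 (M.erase m) (Finset.erase_ssubset hm)
    rw [IsDomSet] at hnd
    push_neg at hnd
    obtain ⟨w, hw1, hw2⟩ := hnd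
    have hwm : w ≠ m := by
      intro hwmeq
      apply hw2 (π m) (Finset.mem_erase.mpr ⟨hadjm.ne', hπmM⟩)
      rw [hwmeq]
      exact hadjm.symm
    have hwM : w ∉ M := fun h => hw1 (Finset.mem_erase.mpr ⟨hwm, h⟩)
    have howner : ∀ u ∈ M, G.Adj u w → u = m := by
      intro u hu hadj
      by_contra hum
      exact hw2 u (Finset.mem_erase.mpr ⟨hum, hu⟩) hadj
    have hadjmw : G.Adj m w := by
      rcases hM.1 w with h | ⟨u, hu, hadj⟩
      · exact absurd h hwM
      · exact (howner u hu hadj) ▸ hadj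
    have hwA : w ∉ A := fun h => hmv ((hAfact w h).2 m hm hadjmw)
    refine ⟨w, ?_, hwM, hadjmw, howner⟩
    rw [hW, Finset.mem_union]
    rintro (h | h)
    · exact hwM (Finset.mem_erase.mp h).2
    · exact hwA h
  have hGood : ∀ x ∈ S, ∃ y, y ∉ W ∧
      (y = x ∨ (x ∈ A ∧ y = v) ∨ (x ∈ M ∧ x ≠ v ∧ y = π x) ∨
       (x ∈ M ∧ x ≠ v ∧ y ∉ M ∧ G.Adj x y ∧ ∀ u ∈ M, G.Adj u y → u = x)) := by
    intro x hx
    by_cases hxW : x ∈ W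
    · rw [hW, Finset.mem_union] at hxW
      rcases hxW with hxM | hxA
      · obtain ⟨hxv, hxM'⟩ := Finset.mem_erase.mp hxM
        by_cases hpxW : π x ∈ W
        · have hπM : π x ∈ M := by
            rw [hW, Finset.mem_union] at hpxW
            rcases hpxW with h | h
            · exact (Finset.mem_erase.mp h).2
            · exact absurd ((hAfact (π x) h).2 x hxM' (hπ x hxv).1) hxv
          obtain ⟨w, h1, h2, h3, h4⟩ := hpriv x hxM' hxv hπM
          exact ⟨w, h1, Or.inr (Or.inr (Or.inr ⟨hxM', hxv, h2, h3, h4⟩))⟩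
        · exact ⟨π x, hpxW, Or.inr (Or.inr (Or.inl ⟨hxM', hxv, rfl⟩))⟩
      · exact ⟨v, hvW, Or.inr (Or.inl ⟨hxA, rfl⟩)⟩
    · exact ⟨x, hxW, Or.inl rfl⟩
  choose! f hf1 hf2 using hGood
  apply Finset.card_le_card_of_injOn f
  · intro x hx
    rw [Finset.mem_coe, Finset.mem_sdiff]
    exact ⟨Finset.mem_univ _, hf1 x (Finset.mem_coe.mp hx)⟩
  · intro x1 hx1' x2 hx2' heq
    have hx1 : x1 ∈ S := Finset.mem_coe.mp hx1'
    have hx2 : x2 ∈ S := Finset.mem_coe.mp hx2'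
    by_contra hne
    have hMC12 := hMC x1 hx1 x2 hx2 hne
    have hMC21 := hMC x2 hx2 x1 hx1 (Ne.symm hne)
    rcases hf2 x1 hx1 with c1 | ⟨hA1, c1⟩ | ⟨hM1, hv1, c1⟩ | ⟨hM1, hv1, hnM1, hadj1, hown1⟩ <;>
      rcases hf2 x2 hx2 with c2 | ⟨hA2, c2⟩ | ⟨hM2, hv2, c2⟩ | ⟨hM2, hv2, hnM2, hadj2, hown2⟩
    · exact hne (by rw [← c1, heq, c2])
    · exact hS1 x1 hx1 (by rw [← c1, heq, c2])
    · exact hMC21.1 (by rw [← c2, ← heq, c1])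
    · have hadj : G.Adj x2 x1 := by rwa [← heq, c1] at hadj2
      rcases hadjpar x2 x1 hadj with h | h
      · exact hMC21.1 h
      · exact hMC12.1 h
    · exact hS1 x2 hx2 (by rw [← c2, ← heq, c1])
    · exact hMC12.2 (by rw [hπA x1 hA1, hπA x2 hA2])
    · have e1 : π x2 = v := by rw [← c2, ← heq, c1]
      exact hMC12.2 ((hπA x1 hA1).trans e1.symm)
    · have e1 : f x2 = v := by rw [← heq, c1]
      exact hnM2 (e1 ▸ hvM)
    · exact hMC12.1 (by rw [← c1, heq, c2])
    · have e1 : π x1 = v := by rw [← c1, heq, c2]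
      exact hMC12.2 (e1.trans (hπA x2 hA2).symm)
    · exact hMC12.2 (by rw [← c1, heq, c2])
    · have hx1adj : G.Adj x1 (f x2) := by rw [← heq, c1]; exact (hπ x1 hv1).1
      exact hne (hown2 x1 hM1 hx1adj)
    · have hadj : G.Adj x1 x2 := by rwa [heq, c2] at hadj1
      rcases hadjpar x1 x2 hadj with h | h
      · exact hMC12.1 h
      · exact hMC21.1 h
    · have e1 : f x1 = v := by rw [heq, c2]
      exact hnM1 (e1 ▸ hvM)
    · have hx2adj : G.Adj x2 (f x1) := by rw [heq, c2]; exact (hπ x2 hv2).1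
      exact hne (hown1 x2 hM2 hx2adj).symm
    · have hx1adj : G.Adj x1 (f x2) := heq ▸ hadj1
      exact hne (hown2 x1 hM1 hx1adj)

theorem exists_larger_minimal_dominating_set_from_a1 (G : SimpleGraph V) (hT : G.IsTree)
    (M : Finset V) (hM : MinimalDomSet G M) (v : V) (hv : v ∈ a1Set G M) :
    ∃ M' : Finset V, MinimalDomSet G M' ∧
      (M.card : ℤ) + ((G.neighborFinset v ∩ N1Set G M).card : ℤ) - 1 ≤ (M'.card : ℤ) ∧
      M.card ≤ M'.card := by
  classical
  set A := G.neighborFinset v ∩ N1Set G M with hA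
  set W := M.erase v ∪ A with hW
  -- v is in M
  have hva : v ∈ aSet G M ∧ (closedNbhd G v ∩ N1Set G M).Nonempty := by
    rw [a1Set, Finset.mem_filter] at hv
    exact hv
  have hvM : v ∈ M := (Finset.mem_filter.mp hva.1).1
  -- A is nonempty
  have hAne : A.Nonempty := by
    obtain ⟨w, hw⟩ := hva.2
    rw [Finset.mem_inter] at hw
    obtain ⟨hw1, hw2⟩ := hw
    have hwM : w ∉ M := by
      rw [N1Set, Finset.mem_filter] at hw2
      exact hw2.2.1
    rw [closedNbhd, Finset.mem_filter] at hw1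
    rcases hw1.2 with h | h
    · exact absurd (h ▸ hvM) hwM
    · exact ⟨w, Finset.mem_inter.mpr ⟨SimpleGraph.mem_neighborFinset G v w |>.mpr h, hw2⟩⟩
  -- parent function
  have hparent : ∀ x : V, ∃ y, (x = v → y = v) ∧ (x ≠ v →
      (G.Adj x y ∧ G.dist y v + 1 = G.dist x v ∧
        ∀ y', G.Adj x y' → G.dist y' v + 1 = G.dist x v → y' = y)) := by
    intro x
    by_cases h : x = v
    · exact ⟨v, fun _ => rfl, fun h' => absurd h h'⟩
    · obtain ⟨y, h1, h2, h3⟩ := exists_parent hT h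
      exact ⟨y, fun h' => absurd h' h, fun _ => ⟨h1, h2, h3⟩⟩
  choose π hπv hπ using hparent
  -- independent set + matching decomposition
  obtain ⟨I, S, hIsub, hIind, hSsub, hSv, hSMC, hcount⟩ :=
    indep_plus_matching hT v π hπ (Finset.univ.card) Finset.univ le_rfl
  -- matching bound
  have hbound : S.card ≤ (Finset.univ \ W).card := by
    rw [hW, hA]
    exact matching_bound hT M hM v hvM π hπ S (fun x hx => (hSv x hx).1)
      hSMC
  -- cardinality of W
  have hWuniv : W.card ≤ Finset.univ.card := Finset.card_le_univ W
  have hsdiff : (Finset.univ \ W).card = Finset.univ.card - W.card :=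
    Finset.card_sdiff_of_subset (Finset.subset_univ W)
  have hdisj : Disjoint (M.erase v) A := by
    rw [Finset.disjoint_left]
    intro a haM haA
    rw [hA, Finset.mem_inter, N1Set, Finset.mem_filter] at haA
    exact haA.2.2.1 (Finset.mem_erase.mp haM).2
  have hWcard : W.card = M.card - 1 + A.card := by
    rw [hW, Finset.card_union_of_disjoint hdisj, Finset.card_erase_of_mem hvM]
  have hM1 : 1 ≤ M.card := Finset.card_pos.mpr ⟨v, hvM⟩
  have hA1 : 1 ≤ A.card := Finset.card_pos.mpr hAne
  have hIW : W.card ≤ I.card := by omega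
  -- maximum cardinality independent set
  have hIfam : I ∈ Finset.univ.filter (fun J : Finset V => ∀ a ∈ J, ∀ b ∈ J, ¬ G.Adj a b) :=
    Finset.mem_filter.mpr ⟨Finset.mem_univ _, hIind⟩
  obtain ⟨J, hJfam, hJmax⟩ := Finset.exists_max_image
    (Finset.univ.filter (fun J : Finset V => ∀ a ∈ J, ∀ b ∈ J, ¬ G.Adj a b))
    Finset.card ⟨I, hIfam⟩
  have hJind : ∀ a ∈ J, ∀ b ∈ J, ¬ G.Adj a b := (Finset.mem_filter.mp hJfam).2
  have hJI : I.card ≤ J.card := hJmax I hIfam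
  have hJdom : IsDomSet G J := by
    intro w
    by_cases hwJ : w ∈ J
    · exact Or.inl hwJ
    · right
      by_contra hcon
      push_neg at hcon
      have hins : ∀ a ∈ insert w J, ∀ b ∈ insert w J, ¬ G.Adj a b := by
        intro a ha b hb
        rcases Finset.mem_insert.mp ha with rfl | ha' <;>
          rcases Finset.mem_insert.mp hb with rfl | hb'
        · exact G.irrefl
        · exact fun h => hcon b hb' h.symm
        · exact hcon a ha'
        · exact hJind a ha' b hb'
      have hle : (insert w J).card ≤ J.card :=
        hJmax _ (Finset.mem_filter.mpr ⟨Finset.mem_univ _, hins⟩)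
      rw [Finset.card_insert_of_notMem hwJ] at hle
      omega
  have hJmin : MinimalDomSet G J := by
    refine ⟨hJdom, ?_⟩
    intro T hTs hTdom
    obtain ⟨x, hxJ, hxT⟩ := Finset.exists_of_ssubset hTs
    rcases hTdom x with hxT' | ⟨u, huT, hu⟩
    · exact hxT hxT'
    · exact hJind u (hTs.subset huT) x hxJ hu
  refine ⟨J, hJmin, ?_, ?_⟩
  · omega
  · omega
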